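/- Let a < b be real numbers, α > 0, β > 0, γ ∈ ℝ, and let c ≥ 0 and d be real numbers with c·a + d > 0 and c(b−a) < c·a + d (so that c x + d > 0 on [a,b] and the hypergeometric series below converges). Then ∫_a^b (x−a)^{α−1} (b−x)^{β−1} (c x + d)^{−γ} dx = (b−a)^{α+β−1} (c·a + d)^{−γ} B(α,β) · ₂F₁(α, γ; α+β; −c(b−a)/(c·a + d)). -/

import Mathlib

open MeasureTheory Set Filter Topology

/-- Pochhammer symbol `(c)_n = c(c+1)⋯(c+n−1)` for a real `c`. -/
noncomputable def poch (c : ℝ) (n : ℕ) : ℝ := ∏ i ∈ Finset.range n, (c + i)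

/-- The Gauss hypergeometric series `₂F₁(a,b;c;z)`. -/
noncomputable def hyp2F1 (a b c z : ℝ) : ℝ :=
  ∑' n : ℕ, poch a n * poch b n / poch c n * z ^ n / n.factorial

/-- The Beta function `B(x,y) = Γ(x)Γ(y)/Γ(x+y)`. -/
noncomputable def betaFn (x y : ℝ) : ℝ := Real.Gamma x * Real.Gamma y / Real.Gamma (x + y)

lemma poch_zero (c : ℝ) : poch c 0 = 1 := by simp [poch]
lemma poch_succ (c : ℝ) (n : ℕ) : poch c (n + 1) = poch c n * (c + n) := by
  simp [poch, Finset.prod_range_succ]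
lemma poch_pos {c : ℝ} (hc : 0 < c) (n : ℕ) : 0 < poch c n := by
  apply Finset.prod_pos; intro i _; positivity
lemma tendsto_ratio_aux (cnum cden : ℝ) :
    Tendsto (fun n : ℕ => (cnum + n) / (cden + n)) atTop (𝓝 1) := by
  have h1 : Tendsto (fun n : ℕ => cden + (n : ℝ)) atTop atTop :=
    tendsto_atTop_add_const_left _ _ tendsto_natCast_atTop_atTop
  have h2 : Tendsto (fun n : ℕ => (cnum - cden) / (cden + n)) atTop (𝓝 0) :=
    Tendsto.div_atTop tendsto_const_nhds h1
  have h3 : Tendsto (fun n : ℕ => 1 + (cnum - cden) / (cden + n)) atTop (𝓝 (1 + 0)) :=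
    tendsto_const_nhds.add h2
  rw [add_zero] at h3
  apply h3.congr'
  filter_upwards [h1.eventually_gt_atTop 0] with n hn
  field_simp; ring

/-- Ratio test packaged for our use. -/
lemma summable_of_ratio_eq {f q : ℕ → ℝ} {L : ℝ} (hL : |L| < 1)
    (hq : Tendsto (fun n => |q n|) atTop (𝓝 |L|))
    (hf : ∀ n, f (n + 1) = q n * f n) : Summable f := by
  apply summable_of_ratio_norm_eventually_le (r := (|L| + 1) / 2) (by linarith)
  have h : ∀ᶠ n in atTop, |q n| ≤ (|L| + 1) / 2 :=
    hq.eventually_le_const (by linarith)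
  filter_upwards [h] with n hn
  rw [hf n]
  simp only [Real.norm_eq_abs, abs_mul]
  exact mul_le_mul_of_nonneg_right hn (abs_nonneg _)
lemma tendsto_q_abs (c y : ℝ) :
    Tendsto (fun n : ℕ => |(c + n) * y / (1 + n)|) atTop (𝓝 |y|) := by
  have h := (tendsto_ratio_aux c 1).abs
  have h2 := h.mul_const |y|
  rw [abs_one, one_mul] at h2
  apply h2.congr
  intro n
  rw [abs_div (c+n), abs_div, abs_mul]
  ring
lemma summable_poch_shift {γ y : ℝ} (hy : |y| < 1) (k : ℕ) :
    Summable (fun n => poch γ (n + k) * y ^ n / n.factorial) := by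
  apply summable_of_ratio_eq (q := fun n => (γ + k + n) * y / (1 + n)) hy
  · have := tendsto_q_abs (γ + k) y
    apply this.congr; intro n; norm_num
  · intro n
    have hfac : ((n + 1).factorial : ℝ) = (n + 1) * n.factorial := by
      rw [Nat.factorial_succ]; push_cast; ring
    have hp : poch γ (n + 1 + k) = poch γ (n + k) * (γ + k + n) := by
      have : n + 1 + k = (n + k) + 1 := by ring
      rw [this, poch_succ]
      push_cast; ring_nf
    rw [hp, hfac, pow_succ]
    have h1 : (n.factorial : ℝ) ≠ 0 := Nat.cast_ne_zero.mpr n.factorial_ne_zero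
    have h2 : ((n : ℝ) + 1) ≠ 0 := by positivity
    field_simp
    ring
theorem hasSum_binomial (γ : ℝ) {y : ℝ} (hy : |y| < 1) :
    HasSum (fun n : ℕ => poch γ n * y ^ n / n.factorial) ((1 - y) ^ (-γ)) := by
  -- setup
  set r : ℝ := (|y| + 1) / 2 with hr_def
  have hy0 : 0 ≤ |y| := abs_nonneg y
  have hyr : |y| < r := by rw [hr_def]; linarith
  have hr1 : r < 1 := by rw [hr_def]; linarith
  have hr0 : 0 < r := by rw [hr_def]; linarith
  have hrabs : |r| < 1 := by rw [abs_of_pos hr0]; exact hr1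
  set g : ℕ → ℝ → ℝ := fun n z => poch γ n * z ^ n / n.factorial with hg_def
  set g' : ℕ → ℝ → ℝ := fun n z => poch γ n * (n * z ^ (n - 1)) / n.factorial with hg'_def
  set S : ℝ → ℝ := fun z => ∑' n, g n z with hS_def
  -- derivative bound sequence
  set v : ℕ → ℝ := fun n => |poch γ (n + 1) * r ^ n / n.factorial| with hv_def
  have hv : Summable v := (summable_poch_shift hrabs 1).abs
  set u : ℕ → ℝ := fun n => match n with | 0 => 0 | Nat.succ m => v m with hu_def
  have hu : Summable u := by
    rw [← summable_nat_add_iff 1]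
    exact hv
  have hgderiv : ∀ n z, HasDerivAt (g n) (g' n z) z := by
    intro n z
    simpa [hg_def, hg'_def, mul_div_assoc] using
      ((hasDerivAt_pow n z).const_mul (poch γ n)).div_const (n.factorial : ℝ)
  have hbound : ∀ n z, z ∈ Ioo (-r) r → ‖g' n z‖ ≤ u n := by
    rintro (_ | m) z hz
    · simp [hg'_def, hu_def]
    · have hzr : |z| ≤ r := le_of_lt (abs_lt.mpr ⟨hz.1, hz.2⟩)
      have : ‖g' (m + 1) z‖ = |poch γ (m + 1)| * ((m + 1) * |z| ^ m) / (m + 1).factorial := by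
        have : |((m:ℝ) + 1)| = (m:ℝ)+1 := abs_of_pos (by positivity)
        simp [hg'_def, abs_mul, abs_div, abs_pow, this]
      rw [this, hu_def]
      show _ ≤ v m
      rw [hv_def]
      simp only
      have h1 : |poch γ (m + 1) * r ^ m / m.factorial|
          = |poch γ (m + 1)| * r ^ m / m.factorial := by
        rw [abs_div, abs_mul, abs_pow, abs_of_pos hr0, Nat.abs_cast]
      rw [h1]
      have hfac : ((m + 1).factorial : ℝ) = (m + 1) * m.factorial := by
        rw [Nat.factorial_succ]; push_cast; ring
      rw [hfac]
      have hzm : |z| ^ m ≤ r ^ m := pow_le_pow_left₀ (abs_nonneg z) hzr m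
      have hmf : (0:ℝ) < m.factorial := by positivity
      rw [div_le_div_iff₀ (by positivity) (by positivity)]
      have : |poch γ (m+1)| * ((↑m+1) * |z| ^ m) * ↑m.factorial
          ≤ |poch γ (m+1)| * ((↑m+1) * r ^ m) * ↑m.factorial := by
        have h2 := mul_le_mul_of_nonneg_left hzm (by positivity : (0:ℝ) ≤ ((m:ℝ)+1))
        exact mul_le_mul_of_nonneg_right
          (mul_le_mul_of_nonneg_left h2 (abs_nonneg _)) hmf.le
      calc |poch γ (m+1)| * ((↑m+1) * |z| ^ m) * ↑m.factorial
          ≤ |poch γ (m+1)| * ((↑m+1) * r ^ m) * ↑m.factorial := this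
        _ = |poch γ (m+1)| * r ^ m * ((↑m+1) * ↑m.factorial) := by ring
  have hsum0 : Summable (fun n => g n 0) := by
    apply summable_of_ne_finset_zero (s := {0})
    intro n hn
    have hn' : n ≠ 0 := by simpa using hn
    obtain ⟨m, rfl⟩ := Nat.exists_eq_succ_of_ne_zero hn'
    simp [hg_def]
  have hmem0 : (0:ℝ) ∈ Ioo (-r) r := by constructor <;> simp [hr0] <;> linarith
  -- key derivative fact
  have hSderiv : ∀ z ∈ Ioo (-r) r, HasDerivAt S (∑' n, g' n z) z := by
    intro z hz
    exact hasDerivAt_tsum_of_isPreconnected hu isOpen_Ioo (convex_Ioo _ _).isPreconnected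
      (fun n w _ => hgderiv n w) hbound hmem0 hsum0 hz
  -- summability of g at each point of the interval
  have hsummg : ∀ z ∈ Ioo (-r : ℝ) r, Summable (fun n => g n z) := by
    intro z hz
    have h1 : |z| < 1 := lt_trans (abs_lt.mpr ⟨hz.1, hz.2⟩) hr1
    have := summable_poch_shift (γ := γ) h1 0
    apply this.congr; intro n; simp [hg_def]
  -- the sum of the derivative series
  have hg'0 : ∀ z : ℝ, g' 0 z = 0 := by intro z; simp [hg'_def]
  have hshift : ∀ z : ℝ, (fun n => g' (n + 1) z)
      = fun n => poch γ (n + 1) * z ^ n / n.factorial := by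
    intro z; funext n
    rw [hg'_def]
    simp only [Nat.add_sub_cancel]
    have hfac : ((n + 1).factorial : ℝ) = (n + 1) * n.factorial := by
      rw [Nat.factorial_succ]; push_cast; ring
    rw [hfac]
    have h1 : (n.factorial : ℝ) ≠ 0 := Nat.cast_ne_zero.mpr n.factorial_ne_zero
    have h2 : ((n : ℝ) + 1) ≠ 0 := by positivity
    push_cast
    field_simp
  have hg'hasSum : ∀ z ∈ Ioo (-r : ℝ) r,
      HasSum (fun n => g' n z) (∑' n, poch γ (n + 1) * z ^ n / n.factorial) := by
    intro z hz
    have h1 : |z| < 1 := lt_trans (abs_lt.mpr ⟨hz.1, hz.2⟩) hr1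
    have hB : Summable (fun n => poch γ (n + 1) * z ^ n / n.factorial) :=
      summable_poch_shift h1 1
    have hs1 : HasSum (fun n => g' (n + 1) z)
        (∑' n, poch γ (n + 1) * z ^ n / n.factorial) := by
      rw [hshift z]; exact hB.hasSum
    have := (hasSum_nat_add_iff (f := fun n => g' n z) 1).mp hs1
    simpa [hg'0 z] using this
  -- the key ODE identity
  have hkey : ∀ z ∈ Ioo (-r : ℝ) r, (1 - z) * (∑' n, g' n z) = γ * S z := by
    intro z hz
    set B : ℝ := ∑' n, poch γ (n + 1) * z ^ n / n.factorial with hB_def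
    have hgs := (hsummg z hz).hasSum
    have hg's := hg'hasSum z hz
    have hcomb : HasSum (fun n => γ * g n z + z * g' n z) (γ * S z + z * B) :=
      (hgs.mul_left γ).add (hg's.mul_left z)
    have hpt : (fun n => γ * g n z + z * g' n z)
        = fun n => poch γ (n + 1) * z ^ n / n.factorial := by
      funext n
      match n with
      | 0 => simp [hg_def, hg'_def, poch_succ, poch_zero]
      | Nat.succ m =>
        rw [hg_def, hg'_def, poch_succ]
        simp only [Nat.add_sub_cancel]
        have hfac : ((m + 1).factorial : ℝ) = (m + 1) * m.factorial := by
          rw [Nat.factorial_succ]; push_cast; ring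
        rw [poch_succ, hfac]
        have h1 : (m.factorial : ℝ) ≠ 0 := Nat.cast_ne_zero.mpr m.factorial_ne_zero
        have h2 : ((m : ℝ) + 1) ≠ 0 := by positivity
        push_cast
        field_simp
        simp only [Nat.succ_eq_add_one, pow_succ]
        ring
    rw [hpt] at hcomb
    have : B = γ * S z + z * B := hcomb.tsum_eq.symm.trans hB_def.symm |>.symm ▸ rfl
    have hBeq : B = γ * S z + z * B := by
      have := hcomb.tsum_eq
      rw [← hB_def] at this
      linarith [this]
    have hTB : (∑' n, g' n z) = B := (hg'hasSum z hz).tsum_eq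
    rw [hTB]
    linarith [hBeq]
  -- G is constant
  set G : ℝ → ℝ := fun z => (1 - z) ^ γ * S z with hG_def
  have hG0 : ∀ z ∈ Ioo (-r : ℝ) r, HasDerivAt G 0 z := by
    intro z hz
    have hz1 : 0 < 1 - z := by have := hz.2; linarith
    have hinner : HasDerivAt (fun w : ℝ => 1 - w) (-1) z := by
      simpa using (hasDerivAt_id z).const_sub 1
    have houter : HasDerivAt (fun x : ℝ => x ^ γ) (γ * (1 - z) ^ (γ - 1)) (1 - z) :=
      Real.hasDerivAt_rpow_const (Or.inl hz1.ne')
    have h1 : HasDerivAt (fun w : ℝ => (1 - w) ^ γ) (γ * (1 - z) ^ (γ - 1) * (-1)) z :=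
      HasDerivAt.comp z houter hinner
    have h2 := h1.mul (hSderiv z hz)
    have hval : γ * (1 - z) ^ (γ - 1) * (-1) * S z + (1 - z) ^ γ * (∑' n, g' n z) = 0 := by
      have hrw : (1 - z) ^ γ = (1 - z) ^ (γ - 1) * (1 - z) := by
        rw [Real.rpow_sub hz1, Real.rpow_one]
        field_simp
      rw [hrw]
      have hk := hkey z hz
      linear_combination ((1:ℝ) - z) ^ (γ - 1) * hk
    rw [hval] at h2
    exact h2
  have hyIoo : y ∈ Ioo (-r : ℝ) r := abs_lt.mp hyr
  have hsub : Icc (min y 0) (max y 0) ⊆ Ioo (-r : ℝ) r := by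
    intro x hx
    constructor
    · have : -r < min y 0 := lt_min hyIoo.1 (by linarith)
      linarith [hx.1]
    · have : max y 0 < r := max_lt hyIoo.2 hr0
      linarith [hx.2]
  have hconst := constant_of_has_deriv_right_zero
    (f := G) (a := min y 0) (b := max y 0)
    (fun x hx => ((hG0 x (hsub hx)).continuousAt).continuousWithinAt)
    (fun x hx => (hG0 x (hsub (Ico_subset_Icc_self hx))).hasDerivWithinAt)
  have hGy : G y = G (min y 0) := hconst y ⟨min_le_left _ _, le_max_left _ _⟩
  have hG00 : G 0 = G (min y 0) := hconst 0 ⟨min_le_right _ _, le_max_right _ _⟩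
  have hS0 : S 0 = 1 := by
    show (∑' n, g n 0) = 1
    rw [tsum_eq_single 0]
    · simp [hg_def, poch_zero]
    · intro n hn
      obtain ⟨m, rfl⟩ := Nat.exists_eq_succ_of_ne_zero hn
      simp [hg_def]
  have hGval : G y = 1 := by
    rw [hGy, ← hG00, hG_def]
    simp [hS0]
  -- conclude
  have h1y : 0 < 1 - y := by
    have := (abs_lt.mp hy).2; linarith
  have hpow : (0:ℝ) < (1 - y) ^ γ := Real.rpow_pos_of_pos h1y γ
  have hSy : S y = (1 - y) ^ (-γ) := by
    rw [hG_def] at hGval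
    simp only at hGval
    rw [Real.rpow_neg h1y.le]
    field_simp at hGval ⊢
    linarith [hGval]
  have := (hsummg y hyIoo).hasSum
  rw [hS_def] at hSy
  simp only at hSy
  rw [hSy] at this
  exact this
lemma complexBeta_eq {p q : ℝ} (hp : 0 < p) (hq : 0 < q) :
    Complex.betaIntegral p q = ((betaFn p q : ℝ) : ℂ) := by
  have hp' : 0 < (p : ℂ).re := by simpa using hp
  have hq' : 0 < (q : ℂ).re := by simpa using hq
  have h := Complex.Gamma_mul_Gamma_eq_betaIntegral hp' hq'
  have hne : Complex.Gamma ((p : ℂ) + q) ≠ 0 := by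
    apply Complex.Gamma_ne_zero_of_re_pos
    simp only [Complex.add_re]
    simpa using by positivity
  have : Complex.betaIntegral p q
      = Complex.Gamma p * Complex.Gamma q / Complex.Gamma ((p : ℂ) + q) := by
    rw [h, mul_div_cancel_left₀ _ hne]
  rw [this, betaFn]
  push_cast [← Complex.Gamma_ofReal]
  rfl
lemma eqOn_complex_integrand {p q : ℝ} :
    ∀ x ∈ Ioo (0:ℝ) 1,
      (x:ℂ) ^ ((p:ℂ) - 1) * ((1:ℂ) - x) ^ ((q:ℂ) - 1)
        = ((x ^ (p-1) * (1-x) ^ (q-1) : ℝ) : ℂ) := by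
  intro x hx
  have hx0 : (0:ℝ) ≤ x := hx.1.le
  have hx1 : (0:ℝ) ≤ 1 - x := by linarith [hx.2]
  rw [Complex.ofReal_mul, Complex.ofReal_cpow hx0, Complex.ofReal_cpow hx1]
  push_cast
  norm_num
lemma integrableOn_beta {p q : ℝ} (hp : 0 < p) (hq : 0 < q) :
    IntegrableOn (fun t : ℝ => t ^ (p-1) * (1-t) ^ (q-1)) (Ioo 0 1) := by
  have hp' : 0 < (p : ℂ).re := by simpa using hp
  have hq' : 0 < (q : ℂ).re := by simpa using hq
  have h := Complex.betaIntegral_convergent hp' hq'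
  rw [intervalIntegrable_iff, uIoc_of_le (by norm_num : (0:ℝ) ≤ 1)] at h
  have h2 : IntegrableOn (fun x : ℝ => (x:ℂ) ^ ((p:ℂ) - 1) * ((1:ℂ) - x) ^ ((q:ℂ) - 1))
      (Ioo 0 1) := h.mono_set Ioo_subset_Ioc_self
  have h3 := h2.re
  apply IntegrableOn.congr_fun h3 _ measurableSet_Ioo
  intro x hx
  have := eqOn_complex_integrand (p := p) (q := q) x hx
  simp only [this]
  simp
lemma integral_beta {p q : ℝ} (hp : 0 < p) (hq : 0 < q) :
    ∫ t in Ioo (0:ℝ) 1, t ^ (p-1) * (1-t) ^ (q-1) = betaFn p q := by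
  have A : (∫ t in Ioo (0:ℝ) 1, ((t ^ (p-1) * (1-t) ^ (q-1) : ℝ) : ℂ))
      = ((∫ t in Ioo (0:ℝ) 1, t ^ (p-1) * (1-t) ^ (q-1) : ℝ) : ℂ) := integral_ofReal
  have key : ((∫ t in Ioo (0:ℝ) 1, t ^ (p-1) * (1-t) ^ (q-1) : ℝ) : ℂ)
      = ((betaFn p q : ℝ) : ℂ) := by
    rw [← A]
    rw [← setIntegral_congr_fun measurableSet_Ioo (eqOn_complex_integrand (p:=p) (q:=q))]
    rw [← integral_Ioc_eq_integral_Ioo]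
    rw [← complexBeta_eq hp hq]
    rw [Complex.betaIntegral]
    rw [intervalIntegral.integral_of_le (by norm_num : (0:ℝ) ≤ 1)]
  exact_mod_cast key
lemma Gamma_add_nat {x : ℝ} (hx : 0 < x) (n : ℕ) :
    Real.Gamma (x + n) = poch x n * Real.Gamma x := by
  induction n with
  | zero => simp [poch_zero]
  | succ m ih =>
    have hxm : (0:ℝ) < x + m := by positivity
    have : x + (m + 1 : ℕ) = (x + m) + 1 := by push_cast; ring
    rw [this, Real.Gamma_add_one hxm.ne', ih, poch_succ]
    ring
lemma betaFn_shift {α β : ℝ} (hα : 0 < α) (hβ : 0 < β) (n : ℕ) :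
    betaFn (α + n) β = betaFn α β * poch α n / poch (α + β) n := by
  have hαβ : 0 < α + β := by positivity
  have h1 : Real.Gamma (α + n) = poch α n * Real.Gamma α := Gamma_add_nat hα n
  have h2 : Real.Gamma (α + n + β) = poch (α + β) n * Real.Gamma (α + β) := by
    have : α + n + β = (α + β) + n := by ring
    rw [this, Gamma_add_nat hαβ n]
  rw [betaFn, betaFn, h1, h2]
  have hg1 : Real.Gamma (α + β) ≠ 0 := (Real.Gamma_pos_of_pos hαβ).ne'
  have hg2 : poch (α + β) n ≠ 0 := (poch_pos hαβ n).ne'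
  field_simp
lemma betaFn_succ {x y : ℝ} (hx : 0 < x) (hy : 0 < y) :
    betaFn (x + 1) y = x / (x + y) * betaFn x y := by
  have hxy : (0:ℝ) < x + y := by positivity
  rw [betaFn, betaFn, Real.Gamma_add_one hx.ne',
    show x + 1 + y = (x + y) + 1 by ring, Real.Gamma_add_one hxy.ne']
  have h1 : Real.Gamma (x + y) ≠ 0 := (Real.Gamma_pos_of_pos hxy).ne'
  field_simp
lemma euler_integral {α β γ w : ℝ} (hα : 0 < α) (hβ : 0 < β) (hw0 : 0 ≤ w) (hw1 : w < 1) :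
    ∫ t in Ioo (0:ℝ) 1, t ^ (α-1) * (1-t) ^ (β-1) * (1 + w*t) ^ (-γ)
      = betaFn α β * hyp2F1 α γ (α + β) (-w) := by
  set coef : ℕ → ℝ := fun n => poch γ n * (-w) ^ n / n.factorial with hcoef_def
  set base : ℕ → ℝ → ℝ := fun n t => t ^ ((α + n) - 1) * (1 - t) ^ (β - 1) with hbase_def
  set F : ℕ → ℝ → ℝ := fun n t => coef n * base n t with hF_def
  have hαn : ∀ n : ℕ, (0:ℝ) < α + n := fun n => by positivity
  have hbase_int : ∀ n, IntegrableOn (base n) (Ioo 0 1) := fun n =>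
    integrableOn_beta (hαn n) hβ
  have hF_int : ∀ n, IntegrableOn (F n) (Ioo 0 1) := fun n =>
    (hbase_int n).const_mul (coef n)
  have hbase_nonneg : ∀ n, ∀ t ∈ Ioo (0:ℝ) 1, 0 ≤ base n t := by
    intro n t ht
    have h1 : (0:ℝ) ≤ t := ht.1.le
    have h2 : (0:ℝ) ≤ 1 - t := by linarith [ht.2]
    rw [hbase_def]
    positivity
  have hbase_integral : ∀ n, ∫ t in Ioo (0:ℝ) 1, base n t = betaFn (α + n) β := fun n =>
    integral_beta (hαn n) hβ
  -- norm integrals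
  have hnormint : ∀ n, ∫ t in Ioo (0:ℝ) 1, ‖F n t‖ = |coef n| * betaFn (α + n) β := by
    intro n
    rw [← hbase_integral n, ← integral_const_mul _ _]
    apply setIntegral_congr_fun measurableSet_Ioo
    intro t ht
    rw [hF_def]
    simp only [Real.norm_eq_abs, abs_mul]
    rw [abs_of_nonneg (hbase_nonneg n t ht)]
  -- the coefficient recurrence
  have hcoef_rec : ∀ n : ℕ, coef (n + 1) = ((γ + n) * (-w) / (1 + n)) * coef n := by
    intro n
    rw [hcoef_def]
    simp only
    rw [poch_succ]
    have hfac : ((n + 1).factorial : ℝ) = (n + 1) * n.factorial := by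
      rw [Nat.factorial_succ]; push_cast; ring
    rw [hfac, pow_succ]
    have h1 : (n.factorial : ℝ) ≠ 0 := Nat.cast_ne_zero.mpr n.factorial_ne_zero
    have h2 : ((n : ℝ) + 1) ≠ 0 := by positivity
    field_simp
    ring
  -- summability of norm integrals
  have hsum_g : Summable (fun n => |coef n| * betaFn (α + n) β) := by
    apply summable_of_ratio_eq (L := w)
      (q := fun n => |γ + n| * w * (α + n) / ((1 + n) * (α + β + n)))
    · rwa [abs_of_nonneg hw0]
    · have t1 : Tendsto (fun n : ℕ => |γ + n| / (1 + n)) atTop (𝓝 1) := by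
        apply (tendsto_ratio_aux γ 1).congr'
        filter_upwards [tendsto_natCast_atTop_atTop.eventually_ge_atTop (-γ)] with n hn
        rw [abs_of_nonneg (by linarith : (0:ℝ) ≤ γ + n)]
      have t2 := tendsto_ratio_aux α (α + β)
      have t3 := (t1.mul t2).mul_const w
      rw [one_mul, one_mul] at t3
      rw [abs_of_nonneg hw0]
      apply t3.congr
      intro n
      have hq0 : (0:ℝ) ≤ |γ + n| * w * (α + n) / ((1 + n) * (α + β + n)) := by
        have := hαn n
        have h1 : (0:ℝ) < 1 + n := by positivity
        have h2 : (0:ℝ) < α + β + n := by positivity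
        positivity
      rw [abs_of_nonneg hq0]
      field_simp
    · intro n
      have hrec := hcoef_rec n
      have habs : |coef (n + 1)| = (|γ + n| * w / (1 + n)) * |coef n| := by
        rw [hrec, abs_mul, abs_div, abs_mul, abs_neg, abs_of_nonneg hw0,
          abs_of_nonneg (by positivity : (0:ℝ) ≤ 1 + (n:ℝ))]
      have hbeta : betaFn (α + (n + 1 : ℕ)) β = ((α + n) / (α + n + β)) * betaFn (α + n) β := by
        have h1 : α + ((n : ℕ) + 1 : ℕ) = (α + n) + 1 := by push_cast; ring
        rw [h1, betaFn_succ (hαn n) hβ]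
      rw [habs, hbeta]
      have h1 : ((1:ℝ) + n) ≠ 0 := by positivity
      have h2 : (α + (n:ℝ) + β) ≠ 0 := by positivity
      have h3 : (α + β + (n:ℝ)) ≠ 0 := by positivity
      field_simp
      ring
  have hsum_norm : Summable (fun n => ∫ t in Ioo (0:ℝ) 1, ‖F n t‖) := by
    apply hsum_g.congr
    intro n
    exact (hnormint n).symm
  -- swap integral and sum
  have key := integral_tsum_of_summable_integral_norm hF_int hsum_norm
  -- identify the right side (the integral of the sum) with our integrand
  have hRHS : ∫ t in Ioo (0:ℝ) 1, (∑' n, F n t)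
      = ∫ t in Ioo (0:ℝ) 1, t ^ (α-1) * (1-t) ^ (β-1) * (1 + w*t) ^ (-γ) := by
    apply setIntegral_congr_fun measurableSet_Ioo
    intro t ht
    have ht0 : (0:ℝ) < t := ht.1
    have ht1 : t < 1 := ht.2
    have hwt : |(-(w * t))| < 1 := by
      rw [abs_neg, abs_of_nonneg (by positivity)]
      nlinarith
    have hbs := hasSum_binomial γ hwt
    have h1mw : (1 : ℝ) - -(w * t) = 1 + w * t := by ring
    rw [h1mw] at hbs
    have hmul := hbs.mul_left (t ^ (α-1) * (1-t) ^ (β-1))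
    have hfun : (fun n => t ^ (α-1) * (1-t) ^ (β-1) * (poch γ n * (-(w * t)) ^ n / n.factorial))
        = fun n => F n t := by
      funext n
      rw [hF_def, hcoef_def, hbase_def]
      simp only
      have hpow : t ^ ((α + n) - 1) = t ^ (α - 1) * t ^ (n : ℕ) := by
        rw [← Real.rpow_natCast t n, ← Real.rpow_add ht0]
        ring_nf
      rw [hpow]
      have : (-(w * t)) ^ (n:ℕ) = (-w) ^ (n:ℕ) * t ^ (n:ℕ) := by
        rw [neg_mul_eq_neg_mul, mul_pow]
      rw [this]
      ring
    rw [hfun] at hmul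
    dsimp only
    rw [hmul.tsum_eq]
  -- identify the left side with the hypergeometric series
  have hLHS : (∑' n, ∫ t in Ioo (0:ℝ) 1, F n t) = betaFn α β * hyp2F1 α γ (α + β) (-w) := by
    have h1 : ∀ n, ∫ t in Ioo (0:ℝ) 1, F n t = coef n * betaFn (α + n) β := by
      intro n
      rw [hF_def]
      simp only
      rw [integral_const_mul _ _, hbase_integral n]
    rw [tsum_congr h1]
    have h2 : ∀ n : ℕ, coef n * betaFn (α + n) β
        = betaFn α β * (poch α n * poch γ n / poch (α + β) n * (-w) ^ n / n.factorial) := by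
      intro n
      rw [betaFn_shift hα hβ n, hcoef_def]
      have hp : poch (α + β) n ≠ 0 := (poch_pos (by positivity) n).ne'
      have hf : (n.factorial : ℝ) ≠ 0 := Nat.cast_ne_zero.mpr n.factorial_ne_zero
      field_simp
    rw [tsum_congr h2, tsum_mul_left, hyp2F1]
  rw [← hRHS, ← key, hLHS]

/-- For `a < b`, `α,β > 0`, `γ ∈ ℝ`, `c ≥ 0`, `c·a + d > 0` and `c(b−a) < c·a + d`:
`∫_a^b (x−a)^{α−1}(b−x)^{β−1}(cx+d)^{−γ} dx
  = (b−a)^{α+β−1}(ca+d)^{−γ} B(α,β) ₂F₁(α,γ;α+β;−c(b−a)/(ca+d))`. -/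
theorem integral_beta_linear_rpow (a b α β γ c d : ℝ) (hab : a < b)
    (hα : 0 < α) (hβ : 0 < β) (hc : 0 ≤ c) (hcd : 0 < c * a + d)
    (hconv : c * (b - a) < c * a + d) :
    ∫ x in Ioo a b, (x - a) ^ (α - 1) * (b - x) ^ (β - 1) * (c * x + d) ^ (-γ)
      = (b - a) ^ (α + β - 1) * (c * a + d) ^ (-γ) * betaFn α β *
          hyp2F1 α γ (α + β) (-(c * (b - a)) / (c * a + d)) := by
  have hba : (0:ℝ) < b - a := by linarith
  set w : ℝ := c * (b - a) / (c * a + d) with hw_def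
  have hw0 : 0 ≤ w := by
    apply div_nonneg _ hcd.le
    positivity
  have hw1 : w < 1 := (div_lt_one hcd).mpr hconv
  set f : ℝ → ℝ := fun x => (x - a) ^ (α - 1) * (b - x) ^ (β - 1) * (c * x + d) ^ (-γ)
    with hf_def
  -- from Ioo to interval integral
  have step1 : ∫ x in Ioo a b, f x = ∫ x in a..b, f x := by
    rw [intervalIntegral.integral_of_le hab.le, integral_Ioc_eq_integral_Ioo]
  -- substitution x = (b-a)*t + a
  have step2 : ∫ t in (0:ℝ)..1, f ((b - a) * t + a) = (b - a)⁻¹ • ∫ x in a..b, f x := by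
    have h := intervalIntegral.integral_comp_mul_add (a := (0:ℝ)) (b := 1) f hba.ne' a
    simpa using h
  -- identify the substituted integrand
  have step3 : ∫ t in (0:ℝ)..1, f ((b - a) * t + a)
      = ((b - a) ^ (α - 1) * (b - a) ^ (β - 1) * (c * a + d) ^ (-γ)) *
          ∫ t in (0:ℝ)..1, t ^ (α-1) * (1-t) ^ (β-1) * (1 + w*t) ^ (-γ) := by
    rw [← intervalIntegral.integral_const_mul]
    apply intervalIntegral.integral_congr
    intro t ht
    rw [uIcc_of_le (by norm_num : (0:ℝ) ≤ 1)] at ht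
    have ht0 : (0:ℝ) ≤ t := ht.1
    have ht1 : t ≤ 1 := ht.2
    have h1 : (b - a) * t + a - a = (b - a) * t := by ring
    have h2 : b - ((b - a) * t + a) = (b - a) * (1 - t) := by ring
    have h3 : c * ((b - a) * t + a) + d = (c * a + d) * (1 + w * t) := by
      rw [hw_def]
      field_simp
      ring
    rw [hf_def]
    simp only
    rw [h1, h2, h3]
    rw [Real.mul_rpow hba.le ht0, Real.mul_rpow hba.le (by linarith : (0:ℝ) ≤ 1 - t),
      Real.mul_rpow hcd.le (by positivity : (0:ℝ) ≤ 1 + w * t)]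
    ring
  -- the Euler integral
  have step4 : ∫ t in (0:ℝ)..1, t ^ (α-1) * (1-t) ^ (β-1) * (1 + w*t) ^ (-γ)
      = betaFn α β * hyp2F1 α γ (α + β) (-w) := by
    rw [intervalIntegral.integral_of_le (by norm_num : (0:ℝ) ≤ 1),
      integral_Ioc_eq_integral_Ioo]
    exact euler_integral hα hβ hw0 hw1
  -- combine
  have hpow : (b - a) * ((b - a) ^ (α - 1) * (b - a) ^ (β - 1))
      = (b - a) ^ (α + β - 1) := by
    rw [show α + β - 1 = (α - 1) + ((β - 1) + 1) by ring, Real.rpow_add hba,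
      Real.rpow_add hba, Real.rpow_one]
    ring
  have harg : -(c * (b - a)) / (c * a + d) = -w := by
    rw [hw_def, neg_div]
  rw [step1]
  have : ∫ x in a..b, f x = (b - a) * ∫ t in (0:ℝ)..1, f ((b - a) * t + a) := by
    rw [step2, smul_eq_mul]
    field_simp
  rw [this, step3, step4, harg]
  rw [← hpow]
  ring
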